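/- Let A, A', B, B' be self-adjoint (Hermitian) 2×2 complex matrices each of operator norm at most 1, and let r_A, r_B ∈ ℂ² be unit vectors. Let 𝔅 := A ⊗ B' + A' ⊗ B' + A' ⊗ B − A ⊗ B (Kronecker products, a self-adjoint 4×4 matrix). Then the expectation value of 𝔅 in the product state r_A ⊗ r_B satisfies −2 ≤ Re⟨r_A ⊗ r_B, 𝔅 (r_A ⊗ r_B)⟩ ≤ 2. That is, the CHSH inequality holds for product measurements in a pure product state. -/

import Mathlib

open scoped InnerProductSpace
open Matrix

noncomputable section

/-- `ℂ²` as a Hilbert space. -/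
abbrev C2 : Type := EuclideanSpace ℂ (Fin 2)

/-- `ℂ⁴` as a Hilbert space. -/
abbrev C4 : Type := EuclideanSpace ℂ (Fin 4)

/-- Kronecker product of vectors: `(x ⊗ y)_(2i+j) = xᵢ · yⱼ`. -/
def vKron (x y : C2) : C4 :=
  (WithLp.equiv 2 (Fin 4 → ℂ)).symm fun k =>
    x (⟨k.val / 2, by omega⟩ : Fin 2) * y (⟨k.val % 2, by omega⟩ : Fin 2)

/-- Kronecker product of 2×2 matrices as a 4×4 matrix. -/
def mKron (M N : Matrix (Fin 2) (Fin 2) ℂ) : Matrix (Fin 4) (Fin 4) ℂ :=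
  Matrix.of fun i j =>
    M (⟨i.val / 2, by omega⟩ : Fin 2) (⟨j.val / 2, by omega⟩ : Fin 2) *
      N (⟨i.val % 2, by omega⟩ : Fin 2) (⟨j.val % 2, by omega⟩ : Fin 2)

/-- The rank-one matrix `u · uᴴ` (`uu*`). -/
def rankOne {n : ℕ} (u : EuclideanSpace ℂ (Fin n)) : Matrix (Fin n) (Fin n) ℂ :=
  Matrix.of fun i j => u i * star (u j)

/-- The vector `(a, b, c, d) ∈ ℂ⁴`. -/
def vec4 (a b c d : ℂ) : C4 :=
  (WithLp.equiv 2 (Fin 4 → ℂ)).symm ![a, b, c, d]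

-- auxiliary lemmas
lemma vKron_eq (x y : C2) : vKron x y =
    (WithLp.equiv 2 (Fin 4 → ℂ)).symm ![x 0 * y 0, x 0 * y 1, x 1 * y 0, x 1 * y 1] := by
  ext k
  fin_cases k <;> rfl

lemma mKron_eq (M N : Matrix (Fin 2) (Fin 2) ℂ) : mKron M N =
    !![M 0 0 * N 0 0, M 0 0 * N 0 1, M 0 1 * N 0 0, M 0 1 * N 0 1;
       M 0 0 * N 1 0, M 0 0 * N 1 1, M 0 1 * N 1 0, M 0 1 * N 1 1;
       M 1 0 * N 0 0, M 1 0 * N 0 1, M 1 1 * N 0 0, M 1 1 * N 0 1;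
       M 1 0 * N 1 0, M 1 0 * N 1 1, M 1 1 * N 1 0, M 1 1 * N 1 1] := by
  ext i j
  fin_cases i <;> fin_cases j <;> rfl

lemma kron_exp (M N : Matrix (Fin 2) (Fin 2) ℂ) (x y : C2) :
    ⟪vKron x y, Matrix.toEuclideanLin (mKron M N) (vKron x y)⟫_ℂ
      = ⟪x, Matrix.toEuclideanLin M x⟫_ℂ * ⟪y, Matrix.toEuclideanLin N y⟫_ℂ := by
  rw [vKron_eq, mKron_eq]
  simp only [Matrix.toEuclideanLin_apply, PiLp.inner_apply,
    WithLp.equiv_symm_apply, PiLp.toLp_apply, WithLp.equiv_apply, Matrix.mulVec, dotProduct,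
    Fin.sum_univ_four, Fin.sum_univ_two, RCLike.inner_apply]
  simp [Matrix.cons_val_zero, Matrix.cons_val_one]
  ring


lemma chsh_real (a a' b b' : ℝ) (ha : |a| ≤ 1) (ha' : |a'| ≤ 1) (hb : |b| ≤ 1) (hb' : |b'| ≤ 1) :
    -2 ≤ a*b' + a'*b' + a'*b - a*b ∧ a*b' + a'*b' + a'*b - a*b ≤ 2 := by
  rw [abs_le] at ha ha' hb hb'
  obtain ⟨ha1, ha2⟩ := ha; obtain ⟨ha'1, ha'2⟩ := ha'
  obtain ⟨hb1, hb2⟩ := hb; obtain ⟨hb'1, hb'2⟩ := hb'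
  constructor <;>
    nlinarith [mul_nonneg (by linarith : (0:ℝ) ≤ 1-a) (by linarith : (0:ℝ) ≤ 1-b),
      mul_nonneg (by linarith : (0:ℝ) ≤ 1-a) (by linarith : (0:ℝ) ≤ 1+b),
      mul_nonneg (by linarith : (0:ℝ) ≤ 1+a) (by linarith : (0:ℝ) ≤ 1-b),
      mul_nonneg (by linarith : (0:ℝ) ≤ 1+a) (by linarith : (0:ℝ) ≤ 1+b),
      mul_nonneg (by linarith : (0:ℝ) ≤ 1-a) (by linarith : (0:ℝ) ≤ 1-b'),
      mul_nonneg (by linarith : (0:ℝ) ≤ 1-a) (by linarith : (0:ℝ) ≤ 1+b'),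
      mul_nonneg (by linarith : (0:ℝ) ≤ 1+a) (by linarith : (0:ℝ) ≤ 1-b'),
      mul_nonneg (by linarith : (0:ℝ) ≤ 1+a) (by linarith : (0:ℝ) ≤ 1+b'),
      mul_nonneg (by linarith : (0:ℝ) ≤ 1-a') (by linarith : (0:ℝ) ≤ 1-b),
      mul_nonneg (by linarith : (0:ℝ) ≤ 1-a') (by linarith : (0:ℝ) ≤ 1+b),
      mul_nonneg (by linarith : (0:ℝ) ≤ 1+a') (by linarith : (0:ℝ) ≤ 1-b),
      mul_nonneg (by linarith : (0:ℝ) ≤ 1+a') (by linarith : (0:ℝ) ≤ 1+b),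
      mul_nonneg (by linarith : (0:ℝ) ≤ 1-a') (by linarith : (0:ℝ) ≤ 1-b'),
      mul_nonneg (by linarith : (0:ℝ) ≤ 1-a') (by linarith : (0:ℝ) ≤ 1+b'),
      mul_nonneg (by linarith : (0:ℝ) ≤ 1+a') (by linarith : (0:ℝ) ≤ 1-b'),
      mul_nonneg (by linarith : (0:ℝ) ≤ 1+a') (by linarith : (0:ℝ) ≤ 1+b')]

lemma herm_im (M : Matrix (Fin 2) (Fin 2) ℂ) (hM : M.IsHermitian) (v : C2) :
    (⟪v, Matrix.toEuclideanLin M v⟫_ℂ).im = 0 := by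
  have hs := (Matrix.isHermitian_iff_isSymmetric.mp hM) v v
  have : (starRingEnd ℂ) ⟪v, Matrix.toEuclideanLin M v⟫_ℂ = ⟪v, Matrix.toEuclideanLin M v⟫_ℂ := by
    rw [inner_conj_symm]; exact hs
  exact Complex.conj_eq_iff_im.mp this

lemma herm_bound (M : Matrix (Fin 2) (Fin 2) ℂ)
    (hMn : ∀ v : C2, ‖Matrix.toEuclideanLin M v‖ ≤ ‖v‖) (v : C2) (hv : ‖v‖ = 1) :
    |(⟪v, Matrix.toEuclideanLin M v⟫_ℂ).re| ≤ 1 := by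
  calc |(⟪v, Matrix.toEuclideanLin M v⟫_ℂ).re| ≤ ‖⟪v, Matrix.toEuclideanLin M v⟫_ℂ‖ :=
        Complex.abs_re_le_norm _
    _ ≤ ‖v‖ * ‖Matrix.toEuclideanLin M v‖ := norm_inner_le_norm _ _
    _ ≤ ‖v‖ * ‖v‖ := by
        exact mul_le_mul_of_nonneg_left (hMn v) (norm_nonneg v)
    _ = 1 := by rw [hv]; ring

/-- The CHSH inequality holds for product measurements in a pure product state:
for self-adjoint 2×2 matrices `A, A', B, B'` of operator norm at most 1 and unit vectors
`r_A, r_B ∈ ℂ²`, the Bell operator `𝔅 = A⊗B' + A'⊗B' + A'⊗B − A⊗B` satisfies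
`−2 ≤ Re⟨r_A ⊗ r_B, 𝔅 (r_A ⊗ r_B)⟩ ≤ 2`. -/
theorem stmt_5 (A A' B B' : Matrix (Fin 2) (Fin 2) ℂ)
    (hA : A.IsHermitian) (hA' : A'.IsHermitian) (hB : B.IsHermitian) (hB' : B'.IsHermitian)
    (hAn : ∀ v : C2, ‖Matrix.toEuclideanLin A v‖ ≤ ‖v‖)
    (hA'n : ∀ v : C2, ‖Matrix.toEuclideanLin A' v‖ ≤ ‖v‖)
    (hBn : ∀ v : C2, ‖Matrix.toEuclideanLin B v‖ ≤ ‖v‖)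
    (hB'n : ∀ v : C2, ‖Matrix.toEuclideanLin B' v‖ ≤ ‖v‖)
    (rA rB : C2) (hrA : ‖rA‖ = 1) (hrB : ‖rB‖ = 1)
    (𝔅 : Matrix (Fin 4) (Fin 4) ℂ)
    (h𝔅 : 𝔅 = mKron A B' + mKron A' B' + mKron A' B - mKron A B) :
    -2 ≤ (⟪vKron rA rB, Matrix.toEuclideanLin 𝔅 (vKron rA rB)⟫_ℂ).re ∧
      (⟪vKron rA rB, Matrix.toEuclideanLin 𝔅 (vKron rA rB)⟫_ℂ).re ≤ 2 := by
  have e : ⟪vKron rA rB, Matrix.toEuclideanLin 𝔅 (vKron rA rB)⟫_ℂ =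
      ⟪rA, Matrix.toEuclideanLin A rA⟫_ℂ * ⟪rB, Matrix.toEuclideanLin B' rB⟫_ℂ +
        ⟪rA, Matrix.toEuclideanLin A' rA⟫_ℂ * ⟪rB, Matrix.toEuclideanLin B' rB⟫_ℂ +
        ⟪rA, Matrix.toEuclideanLin A' rA⟫_ℂ * ⟪rB, Matrix.toEuclideanLin B rB⟫_ℂ -
        ⟪rA, Matrix.toEuclideanLin A rA⟫_ℂ * ⟪rB, Matrix.toEuclideanLin B rB⟫_ℂ := by
    subst h𝔅
    simp only [map_add, map_sub, LinearMap.add_apply, LinearMap.sub_apply,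
      inner_add_right, inner_sub_right, kron_exp]
  rw [e]
  simp only [Complex.add_re, Complex.sub_re, Complex.mul_re,
    herm_im A hA rA, herm_im A' hA' rA, herm_im B hB rB, herm_im B' hB' rB,
    mul_zero, zero_mul, sub_zero]
  exact chsh_real _ _ _ _ (herm_bound A hAn rA hrA) (herm_bound A' hA'n rA hrA)
    (herm_bound B hBn rB hrB) (herm_bound B' hB'n rB hrB)
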